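/- Let Y be a Young diagram contained in Y_{m,n}, let (i,j) ∈ Y, and set Y' = Y∖h_Y(i,j). Let −m < l ≤ r < n be such that d(Y') = d(Y)_{[l,r]}. Assume there exists a box (i',j') ∈ Y' with A(h_{Y'}(i',j')) = A(h_Y(i,j)) as multisets, and set Y'' = Y'∖h_{Y'}(i',j'). Then d(Y'') = d(Y')_{[n−m−r, n−m−l]}. Moreover, there exists no box (i'',j'') ∈ Y'' such that A(h_{Y''}(i'',j'')) = A(h_Y(i,j)). -/

import Mathlib

open Finset

/-- The rectangular Young diagram `Y_{m,n}` (boxes are 1-based pairs `(i,j)`). -/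
def rect (m n : ℕ) : Finset (ℕ × ℕ) := Finset.Icc 1 m ×ˢ Finset.Icc 1 n

/-- `Y` is a Young diagram: a finite set of 1-based boxes, downward closed. -/
def IsYD (Y : Finset (ℕ × ℕ)) : Prop :=
  (∀ p ∈ Y, 1 ≤ p.1 ∧ 1 ≤ p.2) ∧
  (∀ p ∈ Y, ∀ q : ℕ × ℕ, 1 ≤ q.1 → 1 ≤ q.2 → q.1 ≤ p.1 → q.2 ≤ p.2 → q ∈ Y)

/-- `d_k(Y)`: the number of boxes of `Y` on the `k`-th diagonal `j - i = k`. -/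
def dk (Y : Finset (ℕ × ℕ)) (k : ℤ) : ℤ :=
  ((Y.filter fun p => (p.2 : ℤ) - (p.1 : ℤ) = k).card : ℤ)

/-- The set `D_{m,n}` of diagonal sequences: non-negative, vanishing outside
`(-m, n)`, and satisfying the adjacency condition. -/
def Dseq (m n : ℕ) (a : ℤ → ℤ) : Prop :=
  (∀ k : ℤ, 0 ≤ a k) ∧
  (∀ k : ℤ, k ≤ -(m : ℤ) → a k = 0) ∧
  (∀ k : ℤ, (n : ℤ) ≤ k → a k = 0) ∧
  (∀ i : ℤ, -(m : ℤ) < i → i ≤ 0 → a (i - 1) ≤ a i ∧ a i ≤ a (i - 1) + 1) ∧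
  (∀ i : ℤ, 0 < i → i ≤ (n : ℤ) → a i ≤ a (i - 1) ∧ a (i - 1) ≤ a i + 1)

/-- `a_{[l,r]}`: subtract `1` from the components indexed by `l ≤ k ≤ r`. -/
def cut (a : ℤ → ℤ) (l r : ℤ) : ℤ → ℤ := fun k => if l ≤ k ∧ k ≤ r then a k - 1 else a k

/-- The pair `(x,y)` sitting at positions `(k-1,k)` satisfies the adjacency condition. -/
def adjPair (k x y : ℤ) : Prop := if k ≤ 0 then x ≤ y ∧ y ≤ x + 1 else y ≤ x ∧ x ≤ y + 1

/-- `(a_{k-1}, a_k)` is a left bulge, `a_{k-1} ↘ a_k`. -/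
def leftBulge (a : ℤ → ℤ) (k : ℤ) : Prop :=
  adjPair k (a (k - 1)) (a k) ∧ adjPair k (a (k - 1) - 1) (a k)

/-- `(a_{k-1}, a_k)` is a right bulge, `a_{k-1} ↗ a_k`. -/
def rightBulge (a : ℤ → ℤ) (k : ℤ) : Prop :=
  adjPair k (a (k - 1)) (a k) ∧ adjPair k (a (k - 1)) (a k - 1)

/-- The map `E` duplicating the `c`-th component of a sequence. -/
def Emap (c : ℤ) (a : ℤ → ℤ) : ℤ → ℤ := fun k => if k ≤ c then a k else a (k - 1)

def el (c k : ℤ) : ℤ := if k ≤ c then k else k + 1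

def er (c k : ℤ) : ℤ := if k < c then k else k + 1

/-- The unimodal numbering `α_{m,n}(i,j) = min (j-i+m) (i-j+n)`. -/
def unimodal (m n : ℕ) (p : ℕ × ℕ) : ℤ :=
  min ((p.2 : ℤ) - (p.1 : ℤ) + m) ((p.1 : ℤ) - (p.2 : ℤ) + n)

/-- `A(X)`: the multiset of unimodal numbers of the boxes of `X`. -/
def Amul (m n : ℕ) (X : Finset (ℕ × ℕ)) : Multiset ℤ := X.val.map (unimodal m n)

/-- The hook of the box `(i,j)` in `Y`. -/
def hook (Y : Finset (ℕ × ℕ)) (i j : ℕ) : Finset (ℕ × ℕ) :=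
  Y.filter fun p => (p.1 = i ∧ j ≤ p.2) ∨ (p.2 = j ∧ i ≤ p.1)

/-- After removing the hook of `(i,j)`, boxes strictly south-east of `(i,j)` move
up-left by one step. -/
def shiftBox (i j : ℕ) (p : ℕ × ℕ) : ℕ × ℕ :=
  if i < p.1 ∧ j < p.2 then (p.1 - 1, p.2 - 1) else p

/-- The Young diagram `Y ∖ h_Y(i,j)` obtained by removing the hook of `(i,j)`. -/
def removeHook (Y : Finset (ℕ × ℕ)) (i j : ℕ) : Finset (ℕ × ℕ) :=
  (Y \ hook Y i j).image (shiftBox i j)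

/-- One move of MHRG(m,n): remove a hook; if the resulting diagram has a hook with
the same multiset of unimodal numbers, one such hook must also be removed
(this second removal happens at most once). -/
def Move (m n : ℕ) (Y Y' : Finset (ℕ × ℕ)) : Prop :=
  ∃ i j : ℕ, (i, j) ∈ Y ∧
    ((Y' = removeHook Y i j ∧
        ¬∃ i' j' : ℕ, (i', j') ∈ removeHook Y i j ∧
          Amul m n (hook (removeHook Y i j) i' j') = Amul m n (hook Y i j)) ∨
      (∃ i' j' : ℕ, (i', j') ∈ removeHook Y i j ∧
        Amul m n (hook (removeHook Y i j) i' j') = Amul m n (hook Y i j) ∧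
        Y' = removeHook (removeHook Y i j) i' j'))

/-- `T(Y_{m,n})`: the positions of MHRG(m,n) reachable from the starting position. -/
def Reach (m n : ℕ) (Y : Finset (ℕ × ℕ)) : Prop :=
  Relation.ReflTransGen (Move m n) (rect m n) Y

/-- `O(Y)`: the set of options of a position `Y` in MHRG(m,n). -/
def Opt (m n : ℕ) (Y : Finset (ℕ × ℕ)) : Set (Finset (ℕ × ℕ)) := {Y' | Move m n Y Y'}

lemma card_removeHook_lt (Y : Finset (ℕ × ℕ)) (i j : ℕ) (h : (i, j) ∈ Y) :
    (removeHook Y i j).card < Y.card := by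
  have hsub : hook Y i j ⊆ Y := Finset.filter_subset _ _
  have hmem : (i, j) ∈ hook Y i j :=
    Finset.mem_filter.mpr ⟨h, Or.inl ⟨rfl, le_rfl⟩⟩
  have h1 : (removeHook Y i j).card ≤ (Y \ hook Y i j).card := Finset.card_image_le
  have h2 : (Y \ hook Y i j).card = Y.card - (hook Y i j).card := by
    rw [Finset.card_sdiff, Finset.inter_eq_left.mpr hsub]
  have h3 : 0 < (hook Y i j).card := Finset.card_pos.mpr ⟨_, hmem⟩
  have h4 : (hook Y i j).card ≤ Y.card := Finset.card_le_card hsub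
  omega

lemma move_card_lt {m n : ℕ} {Y Y' : Finset (ℕ × ℕ)} (h : Move m n Y Y') :
    Y'.card < Y.card := by
  obtain ⟨i, j, hij, hc⟩ := h
  rcases hc with ⟨rfl, -⟩ | ⟨i', j', hij', -, rfl⟩
  · exact card_removeHook_lt Y i j hij
  · exact (card_removeHook_lt _ i' j' hij').trans (card_removeHook_lt Y i j hij)

/-- The minimal excludant. -/
noncomputable def mex (s : Set ℕ) : ℕ := sInf {k | k ∉ s}

/-- The Grundy value of a position of MHRG(m,n). -/
noncomputable def grundy (m n : ℕ) (Y : Finset (ℕ × ℕ)) : ℕ :=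
  mex {g : ℕ | ∃ Y', ∃ _ : Move m n Y Y', grundy m n Y' = g}
termination_by Y.card
decreasing_by exact move_card_lt (by assumption)

/-- The two-row Young diagram `(λ₁, λ₂)`. -/
def tworow (a b : ℕ) : Finset (ℕ × ℕ) :=
  ({1} : Finset ℕ) ×ˢ Finset.Icc 1 a ∪ ({2} : Finset ℕ) ×ˢ Finset.Icc 1 b

/-- `S` is a shifted Young diagram: rows are intervals `[i, λ_i]` with `λ` strictly
decreasing. -/
def IsShifted (S : Finset (ℕ × ℕ)) : Prop :=
  (∀ p ∈ S, 1 ≤ p.1 ∧ p.1 ≤ p.2) ∧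
  (∀ p ∈ S, ∀ j' : ℕ, p.1 ≤ j' → j' ≤ p.2 → (p.1, j') ∈ S) ∧
  (∀ p ∈ S, 2 ≤ p.1 → (p.1 - 1, p.2 + 1) ∈ S)

/-- The shifted Young diagram of a (strictly decreasing, positive) list of row lengths. -/
def shiftedOf (l : List ℕ) : Finset (ℕ × ℕ) :=
  (Finset.range l.length).biUnion fun i =>
    ({i + 1} : Finset ℕ) ×ˢ Finset.Icc (i + 1) (l.getD i 0)

/-- The staircase `S_n = (n, n-1, …, 1)`. -/
def staircase (n : ℕ) : List ℕ := (List.range n).map fun i => n - i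

/-- The shifted hook of the box `(i,j)` in `S` (box, arm, leg and tail). -/
def shook (S : Finset (ℕ × ℕ)) (i j : ℕ) : Finset (ℕ × ℕ) :=
  S.filter fun p => (p.1 = i ∧ j ≤ p.2) ∨ (p.2 = j ∧ i ≤ p.1) ∨ (p.1 = j + 1 ∧ j < p.2)

/-- The shifting of boxes performed after removing the shifted hook of `(i,j)`. -/
def sShiftBox (i j : ℕ) (p : ℕ × ℕ) : ℕ × ℕ :=
  if i < p.1 ∧ p.1 < j + 1 ∧ j < p.2 then (p.1 - 1, p.2 - 1)
  else if j + 1 < p.1 then (p.1 - 2, p.2 - 2)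
  else p

/-- The shifted Young diagram obtained by removing the shifted hook of `(i,j)`. -/
def sRemoveHook (S : Finset (ℕ × ℕ)) (i j : ℕ) : Finset (ℕ × ℕ) :=
  (S \ shook S i j).image (sShiftBox i j)

/-- One move of HRG on shifted Young diagrams: remove one hook. -/
def SMove (S S' : Finset (ℕ × ℕ)) : Prop :=
  ∃ i j : ℕ, (i, j) ∈ S ∧ S' = sRemoveHook S i j

lemma card_sRemoveHook_lt (S : Finset (ℕ × ℕ)) (i j : ℕ) (h : (i, j) ∈ S) :
    (sRemoveHook S i j).card < S.card := by
  have hsub : shook S i j ⊆ S := Finset.filter_subset _ _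
  have hmem : (i, j) ∈ shook S i j :=
    Finset.mem_filter.mpr ⟨h, Or.inl ⟨rfl, le_rfl⟩⟩
  have h1 : (sRemoveHook S i j).card ≤ (S \ shook S i j).card := Finset.card_image_le
  have h2 : (S \ shook S i j).card = S.card - (shook S i j).card := by
    rw [Finset.card_sdiff, Finset.inter_eq_left.mpr hsub]
  have h3 : 0 < (shook S i j).card := Finset.card_pos.mpr ⟨_, hmem⟩
  have h4 : (shook S i j).card ≤ S.card := Finset.card_le_card hsub
  omega

lemma smove_card_lt {S S' : Finset (ℕ × ℕ)} (h : SMove S S') : S'.card < S.card := by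
  obtain ⟨i, j, hij, rfl⟩ := h
  exact card_sRemoveHook_lt S i j hij

/-- The Grundy value of a position of HRG on shifted Young diagrams. -/
noncomputable def sgrundy (S : Finset (ℕ × ℕ)) : ℕ :=
  mex {g : ℕ | ∃ S', ∃ _ : SMove S S', sgrundy S' = g}
termination_by S.card
decreasing_by exact smove_card_lt (by assumption)

/-- `OH(Y)` for a two-row diagram `Y = (λ₁,λ₂)`: the results of single hook removals. -/
def OH (l1 l2 : ℕ) : Set (Finset (ℕ × ℕ)) :=
  {Y | ∃ a : ℕ, l2 ≤ a ∧ a < l1 ∧ Y = tworow a l2} ∪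
  {Y | ∃ b : ℕ, b < l2 ∧ Y = tworow l1 b} ∪
  {Y | ∃ a : ℕ, a < l2 ∧ Y = tworow (l2 - 1) a}


lemma cut_app (a : ℤ → ℤ) (l r k : ℤ) :
    cut a l r k = if l ≤ k ∧ k ≤ r then a k - 1 else a k := rfl

def rowLen (Z : Finset (ℕ × ℕ)) (p : ℕ) : ℕ := (Z.filter fun b => b.1 = p).card
def colLen (Z : Finset (ℕ × ℕ)) (q : ℕ) : ℕ := (Z.filter fun b => b.2 = q).card

lemma mem_rect {m n : ℕ} {b : ℕ × ℕ} : b ∈ rect m n ↔ (1 ≤ b.1 ∧ b.1 ≤ m) ∧ (1 ≤ b.2 ∧ b.2 ≤ n) := by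
  simp [rect, Finset.mem_Icc]

lemma mem_row {Z : Finset (ℕ × ℕ)} (hY : IsYD Z) {p q : ℕ} :
    (p, q) ∈ Z ↔ 1 ≤ p ∧ 1 ≤ q ∧ q ≤ rowLen Z p := by
  constructor
  · intro h
    obtain ⟨hp, hq⟩ := hY.1 _ h
    refine ⟨hp, hq, ?_⟩
    have : (Finset.Icc 1 q).card ≤ (Z.filter fun b => b.1 = p).card := by
      apply Finset.card_le_card_of_injOn (fun q' => (p, q'))
      · intro q' hq'
        simp only [Finset.coe_Icc, Set.mem_Icc, Finset.mem_coe, Finset.mem_Icc] at hq'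
        exact Finset.mem_filter.mpr ⟨hY.2 _ h (p, q') hp hq'.1 le_rfl hq'.2, rfl⟩
      · intro x _ y _ hxy
        simpa using hxy
    simpa [rowLen] using this
  · rintro ⟨hp, hq, hle⟩
    by_contra hmem
    have hsub : (Z.filter fun b => b.1 = p) ⊆ (Finset.Icc 1 (q-1)).image (fun q' => (p, q')) := by
      intro b hb
      simp only [Finset.mem_filter] at hb
      obtain ⟨hbZ, hbp⟩ := hb
      have hb2 : 1 ≤ b.2 := (hY.1 _ hbZ).2
      have : b.2 < q := by
        by_contra hge
        exact hmem (hY.2 _ hbZ (p, q) hp hq (by omega) (by omega))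
      simp only [Finset.mem_image, Finset.mem_Icc]
      exact ⟨b.2, ⟨hb2, by omega⟩, by rw [← hbp]⟩
    have := Finset.card_le_card hsub
    have h2 := Finset.card_image_le (s := Finset.Icc 1 (q-1)) (f := fun q' => (p, q'))
    simp only [Nat.card_Icc] at h2
    unfold rowLen at hle
    omega

lemma mem_col {Z : Finset (ℕ × ℕ)} (hY : IsYD Z) {p q : ℕ} :
    (p, q) ∈ Z ↔ 1 ≤ q ∧ 1 ≤ p ∧ p ≤ colLen Z q := by
  constructor
  · intro h
    obtain ⟨hp, hq⟩ := hY.1 _ h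
    refine ⟨hq, hp, ?_⟩
    have : (Finset.Icc 1 p).card ≤ (Z.filter fun b => b.2 = q).card := by
      apply Finset.card_le_card_of_injOn (fun p' => (p', q))
      · intro p' hp'
        simp only [Finset.coe_Icc, Set.mem_Icc, Finset.mem_coe, Finset.mem_Icc] at hp'
        exact Finset.mem_filter.mpr ⟨hY.2 _ h (p', q) hp'.1 hq hp'.2 le_rfl, rfl⟩
      · intro x _ y _ hxy
        simpa using hxy
    simpa [colLen] using this
  · rintro ⟨hq, hp, hle⟩
    by_contra hmem
    have hsub : (Z.filter fun b => b.2 = q) ⊆ (Finset.Icc 1 (p-1)).image (fun p' => (p', q)) := by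
      intro b hb
      simp only [Finset.mem_filter] at hb
      obtain ⟨hbZ, hbq⟩ := hb
      have hb1 : 1 ≤ b.1 := (hY.1 _ hbZ).1
      have : b.1 < p := by
        by_contra hge
        exact hmem (hY.2 _ hbZ (p, q) hp hq (by omega) (by omega))
      simp only [Finset.mem_image, Finset.mem_Icc]
      exact ⟨b.1, ⟨hb1, by omega⟩, by rw [← hbq]⟩
    have := Finset.card_le_card hsub
    have h2 := Finset.card_image_le (s := Finset.Icc 1 (p-1)) (f := fun p' => (p', q))
    simp only [Nat.card_Icc] at h2
    unfold colLen at hle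
    omega

lemma isYD_dseq {m n : ℕ} {Z : Finset (ℕ × ℕ)} (hY : IsYD Z) (hsub : Z ⊆ rect m n) :
    Dseq m n (dk Z) := by
  refine ⟨fun k => Int.natCast_nonneg _, ?_, ?_, ?_, ?_⟩
  · intro k hk
    unfold dk
    rw [Int.natCast_eq_zero, Finset.card_eq_zero, Finset.filter_eq_empty_iff]
    intro b hb
    obtain ⟨⟨h1, h2⟩, ⟨h3, h4⟩⟩ := mem_rect.mp (hsub hb)
    intro hd
    omega
  · intro k hk
    unfold dk
    rw [Int.natCast_eq_zero, Finset.card_eq_zero, Finset.filter_eq_empty_iff]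
    intro b hb
    obtain ⟨⟨h1, h2⟩, ⟨h3, h4⟩⟩ := mem_rect.mp (hsub hb)
    intro hd
    omega
  · intro i hi hi0
    constructor
    · unfold dk
      apply Nat.cast_le.mpr
      apply Finset.card_le_card_of_injOn (fun b => (b.1 - 1, b.2))
      · intro b hb
        simp only [Finset.mem_coe, Finset.mem_filter] at hb ⊢
        obtain ⟨hbZ, hd⟩ := hb
        obtain ⟨hb1, hb2⟩ := hY.1 _ hbZ
        have hp2 : 2 ≤ b.1 := by omega
        refine ⟨hY.2 _ hbZ (b.1 - 1, b.2) (by omega) hb2 (by omega) le_rfl, ?_⟩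
        show (b.2 : ℤ) - ((b.1 - 1 : ℕ) : ℤ) = i
        omega
      · intro x hx y hy hxy
        simp only [Finset.mem_coe, Finset.mem_filter] at hx hy
        simp only [Prod.mk.injEq] at hxy
        have hd1 := hx.2; have hd2 := hy.2
        have e2 : x.2 = y.2 := hxy.2
        have e1 : x.1 = y.1 := by omega
        exact Prod.ext e1 e2
    · unfold dk
      have hsplit := Finset.card_filter_add_card_filter_not
        (s := Z.filter (fun p => (p.2 : ℤ) - (p.1 : ℤ) = i)) (p := fun b => 2 ≤ b.2)
      have h1 : ((Z.filter (fun p => (p.2 : ℤ) - (p.1 : ℤ) = i)).filter fun b => 2 ≤ b.2).card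
          ≤ (Z.filter fun p => (p.2 : ℤ) - (p.1 : ℤ) = i - 1).card := by
        apply Finset.card_le_card_of_injOn (fun b => (b.1, b.2 - 1))
        · intro b hb
          simp only [Finset.mem_coe, Finset.mem_filter] at hb ⊢
          obtain ⟨⟨hbZ, hd⟩, hb2⟩ := hb
          obtain ⟨hbp1, hbp2⟩ := hY.1 _ hbZ
          refine ⟨hY.2 _ hbZ (b.1, b.2 - 1) hbp1 (by omega) le_rfl (by omega), ?_⟩
          show ((b.2 - 1 : ℕ) : ℤ) - (b.1 : ℤ) = i - 1
          omega
        · intro x hx y hy hxy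
          simp only [Finset.mem_coe, Finset.mem_filter] at hx hy
          simp only [Prod.mk.injEq] at hxy
          have e1 : x.1 = y.1 := hxy.1
          have hx2 := hx.2; have hy2 := hy.2
          have e2 : x.2 = y.2 := by omega
          exact Prod.ext e1 e2
      have h2 : ((Z.filter (fun p => (p.2 : ℤ) - (p.1 : ℤ) = i)).filter
          fun b => ¬ 2 ≤ b.2).card ≤ 1 := by
        rw [Finset.card_le_one]
        intro x hx y hy
        simp only [Finset.mem_filter] at hx hy
        obtain ⟨⟨hxZ, hxd⟩, hx2⟩ := hx
        obtain ⟨⟨hyZ, hyd⟩, hy2⟩ := hy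
        obtain ⟨hxa, hxb⟩ := hY.1 _ hxZ
        obtain ⟨hya, hyb⟩ := hY.1 _ hyZ
        have e2 : x.2 = y.2 := by omega
        have e1 : x.1 = y.1 := by omega
        exact Prod.ext e1 e2
      omega
  · intro i hi hin
    constructor
    · unfold dk
      apply Nat.cast_le.mpr
      apply Finset.card_le_card_of_injOn (fun b => (b.1, b.2 - 1))
      · intro b hb
        simp only [Finset.mem_coe, Finset.mem_filter] at hb ⊢
        obtain ⟨hbZ, hd⟩ := hb
        obtain ⟨hb1, hb2⟩ := hY.1 _ hbZ
        have hq2 : 2 ≤ b.2 := by omega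
        refine ⟨hY.2 _ hbZ (b.1, b.2 - 1) hb1 (by omega) le_rfl (by omega), ?_⟩
        show ((b.2 - 1 : ℕ) : ℤ) - (b.1 : ℤ) = i - 1
        omega
      · intro x hx y hy hxy
        simp only [Finset.mem_coe, Finset.mem_filter] at hx hy
        simp only [Prod.mk.injEq] at hxy
        have e1 : x.1 = y.1 := hxy.1
        have hd1 := hx.2; have hd2 := hy.2
        have e2 : x.2 = y.2 := by omega
        exact Prod.ext e1 e2
    · unfold dk
      have hsplit := Finset.card_filter_add_card_filter_not
        (s := Z.filter (fun p => (p.2 : ℤ) - (p.1 : ℤ) = i - 1)) (p := fun b => 2 ≤ b.1)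
      have h1 : ((Z.filter (fun p => (p.2 : ℤ) - (p.1 : ℤ) = i - 1)).filter
          fun b => 2 ≤ b.1).card
          ≤ (Z.filter fun p => (p.2 : ℤ) - (p.1 : ℤ) = i).card := by
        apply Finset.card_le_card_of_injOn (fun b => (b.1 - 1, b.2))
        · intro b hb
          simp only [Finset.mem_coe, Finset.mem_filter] at hb ⊢
          obtain ⟨⟨hbZ, hd⟩, hb1⟩ := hb
          obtain ⟨hbp1, hbp2⟩ := hY.1 _ hbZ
          refine ⟨hY.2 _ hbZ (b.1 - 1, b.2) (by omega) hbp2 (by omega) le_rfl, ?_⟩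
          show (b.2 : ℤ) - ((b.1 - 1 : ℕ) : ℤ) = i
          omega
        · intro x hx y hy hxy
          simp only [Finset.mem_coe, Finset.mem_filter] at hx hy
          simp only [Prod.mk.injEq] at hxy
          have e2 : x.2 = y.2 := hxy.2
          have hx1 := hx.2; have hy1 := hy.2
          have e1 : x.1 = y.1 := by omega
          exact Prod.ext e1 e2
      have h2 : ((Z.filter (fun p => (p.2 : ℤ) - (p.1 : ℤ) = i - 1)).filter
          fun b => ¬ 2 ≤ b.1).card ≤ 1 := by
        rw [Finset.card_le_one]
        intro x hx y hy
        simp only [Finset.mem_filter] at hx hy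
        obtain ⟨⟨hxZ, hxd⟩, hx1⟩ := hx
        obtain ⟨⟨hyZ, hyd⟩, hy1⟩ := hy
        obtain ⟨hxa, hxb⟩ := hY.1 _ hxZ
        obtain ⟨hya, hyb⟩ := hY.1 _ hyZ
        have e1 : x.1 = y.1 := by omega
        have e2 : x.2 = y.2 := by omega
        exact Prod.ext e1 e2
      omega

lemma mem_hook {Z : Finset (ℕ × ℕ)} {i j : ℕ} {b : ℕ × ℕ} :
    b ∈ hook Z i j ↔ b ∈ Z ∧ ((b.1 = i ∧ j ≤ b.2) ∨ (b.2 = j ∧ i ≤ b.1)) :=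
  Finset.mem_filter

lemma removeHook_subset_rect {m n : ℕ} {Z : Finset (ℕ × ℕ)} (hsub : Z ⊆ rect m n)
    {i j : ℕ} (hi : 1 ≤ i) (hj : 1 ≤ j) : removeHook Z i j ⊆ rect m n := by
  intro b hb
  simp only [removeHook, Finset.mem_image] at hb
  obtain ⟨c, hc, hce⟩ := hb
  have hcZ : c ∈ Z := (Finset.mem_sdiff.mp hc).1
  obtain ⟨⟨h1, h2⟩, ⟨h3, h4⟩⟩ := mem_rect.mp (hsub hcZ)
  rw [mem_rect]
  unfold shiftBox at hce
  split_ifs at hce with hcond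
  · rw [← hce]; simp only; omega
  · rw [← hce]; exact ⟨⟨h1, h2⟩, h3, h4⟩

lemma removeHook_isYD {Z : Finset (ℕ × ℕ)} (hY : IsYD Z) {i j : ℕ}
    (hi : 1 ≤ i) (hj : 1 ≤ j) : IsYD (removeHook Z i j) := by
  have hmem : ∀ b : ℕ × ℕ, b ∈ removeHook Z i j ↔
      ∃ c ∈ Z, c ∉ hook Z i j ∧ shiftBox i j c = b := by
    intro b
    simp only [removeHook, Finset.mem_image, Finset.mem_sdiff]
    constructor
    · rintro ⟨c, ⟨h1, h2⟩, h3⟩; exact ⟨c, h1, h2, h3⟩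
    · rintro ⟨c, h1, h2, h3⟩; exact ⟨c, ⟨h1, h2⟩, h3⟩
  have hpos : ∀ b ∈ removeHook Z i j, 1 ≤ b.1 ∧ 1 ≤ b.2 := by
    intro b hb
    obtain ⟨c, hcZ, hch, hce⟩ := (hmem b).mp hb
    obtain ⟨h1, h2⟩ := hY.1 _ hcZ
    unfold shiftBox at hce
    split_ifs at hce with hcond
    · rw [← hce]; simp only; omega
    · rw [← hce]; exact ⟨h1, h2⟩
  -- row closure
  have hrow : ∀ p q q0 : ℕ, (p, q) ∈ removeHook Z i j → 1 ≤ q0 → q0 ≤ q →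
      (p, q0) ∈ removeHook Z i j := by
    intro p q q0 hb hq0 hq0q
    obtain ⟨c, hcZ, hch, hce⟩ := (hmem (p, q)).mp hb
    obtain ⟨hc1, hc2⟩ := hY.1 _ hcZ
    unfold shiftBox at hce
    split_ifs at hce with hcond
    · -- c = (p+1, q+1)
      have hc : c = (p + 1, q + 1) := by
        have e1 : c.1 - 1 = p := congrArg Prod.fst hce
        have e2 : c.2 - 1 = q := congrArg Prod.snd hce
        have : c.1 = p + 1 := by omega
        have : c.2 = q + 1 := by omega
        exact Prod.ext (by omega) (by omega)
      rw [hc] at hcZ hcond hch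
      have hci : i ≤ p := by have := hcond.1; simp only at this; omega
      have hcj : j ≤ q := by have := hcond.2; simp only at this; omega
      by_cases hq0j : j ≤ q0
      · refine (hmem (p, q0)).mpr ⟨(p + 1, q0 + 1), ?_, ?_, ?_⟩
        · exact hY.2 _ hcZ (p + 1, q0 + 1) (by omega) (by omega) le_rfl (by omega)
        · rw [mem_hook]
          rintro ⟨-, ⟨e, _⟩ | ⟨e, _⟩⟩
          · simp only at e; omega
          · simp only at e; omega
        · unfold shiftBox
          rw [if_pos ⟨by simpa using hcond.1, by simp only; omega⟩]
          simp
      · refine (hmem (p, q0)).mpr ⟨(p, q0), ?_, ?_, ?_⟩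
        · exact hY.2 _ hcZ (p, q0) (by omega) hq0 (by omega) (by omega)
        · rw [mem_hook]
          rintro ⟨-, ⟨_, e⟩ | ⟨e, _⟩⟩
          · simp only at e; omega
          · simp only at e; omega
        · unfold shiftBox
          rw [if_neg (by simp only; omega)]
    · -- c = (p, q)
      rw [hce] at hcZ hcond hch
      refine (hmem (p, q0)).mpr ⟨(p, q0), ?_, ?_, ?_⟩
      · exact hY.2 _ hcZ (p, q0) (hY.1 _ hcZ).1 hq0 le_rfl (by omega)
      · rw [mem_hook]
        rw [mem_hook] at hch
        rintro ⟨hZm, ⟨e1, e2⟩ | ⟨e1, e2⟩⟩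
        · simp only at e1 e2
          exact hch ⟨hcZ, Or.inl ⟨e1, by omega⟩⟩
        · simp only at e1 e2
          -- q0 = j, i ≤ p : show (p,q) in hook for contradiction
          have hpi : p ≤ i ∨ q ≤ j := by
            by_contra hcon
            push_neg at hcon
            exact hcond ⟨hcon.1, hcon.2⟩
          rcases hpi with hpi | hqj
          · have : p = i := by omega
            exact hch ⟨hcZ, Or.inl ⟨this, by omega⟩⟩
          · have : q = j := by omega
            exact hch ⟨hcZ, Or.inr ⟨this, by omega⟩⟩
      · unfold shiftBox
        rw [if_neg (by simp only; omega)]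
  -- column closure
  have hcol : ∀ p q p0 : ℕ, (p, q) ∈ removeHook Z i j → 1 ≤ p0 → p0 ≤ p →
      (p0, q) ∈ removeHook Z i j := by
    intro p q p0 hb hp0 hp0p
    obtain ⟨c, hcZ, hch, hce⟩ := (hmem (p, q)).mp hb
    obtain ⟨hc1, hc2⟩ := hY.1 _ hcZ
    unfold shiftBox at hce
    split_ifs at hce with hcond
    · have hc : c = (p + 1, q + 1) := by
        have e1 : c.1 - 1 = p := congrArg Prod.fst hce
        have e2 : c.2 - 1 = q := congrArg Prod.snd hce
        exact Prod.ext (by omega) (by omega)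
      rw [hc] at hcZ hcond hch
      have hci : i ≤ p := by have := hcond.1; simp only at this; omega
      have hcj : j ≤ q := by have := hcond.2; simp only at this; omega
      by_cases hp0i : i ≤ p0
      · refine (hmem (p0, q)).mpr ⟨(p0 + 1, q + 1), ?_, ?_, ?_⟩
        · exact hY.2 _ hcZ (p0 + 1, q + 1) (by omega) (by omega) (by omega) le_rfl
        · rw [mem_hook]
          rintro ⟨-, ⟨e, _⟩ | ⟨e, _⟩⟩
          · simp only at e; omega
          · simp only at e
            have := hcond.2
            simp only at this
            omega
        · unfold shiftBox
          rw [if_pos ⟨by simp only; omega, by simpa using hcond.2⟩]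
          simp
      · refine (hmem (p0, q)).mpr ⟨(p0, q), ?_, ?_, ?_⟩
        · exact hY.2 _ hcZ (p0, q) hp0 (by omega) (by omega) (by omega)
        · rw [mem_hook]
          rintro ⟨-, ⟨e, _⟩ | ⟨_, e⟩⟩
          · simp only at e; omega
          · simp only at e; omega
        · unfold shiftBox
          rw [if_neg (by simp only; omega)]
    · rw [hce] at hcZ hcond hch
      have hq1 : 1 ≤ q := (hY.1 _ hcZ).2
      refine (hmem (p0, q)).mpr ⟨(p0, q), ?_, ?_, ?_⟩
      · exact hY.2 _ hcZ (p0, q) hp0 hq1 (by omega) le_rfl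
      · rw [mem_hook]
        rw [mem_hook] at hch
        rintro ⟨hZm, ⟨e1, e2⟩ | ⟨e1, e2⟩⟩
        · simp only at e1 e2
          have hpi : p ≤ i ∨ q ≤ j := by
            by_contra hcon
            push_neg at hcon
            exact hcond ⟨hcon.1, hcon.2⟩
          rcases hpi with hpi | hqj
          · have : p = i := by omega
            exact hch ⟨hcZ, Or.inl ⟨this, by omega⟩⟩
          · have : q = j := by omega
            exact hch ⟨hcZ, Or.inr ⟨this, by omega⟩⟩
        · simp only at e1 e2
          exact hch ⟨hcZ, Or.inr ⟨e1, by omega⟩⟩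
      · unfold shiftBox
        rw [if_neg (by simp only; omega)]
  refine ⟨hpos, ?_⟩
  rintro ⟨p, q⟩ hb ⟨p0, q0⟩ h1 h2 h3 h4
  simp only at h1 h2 h3 h4
  exact hrow p0 q q0 (hcol p q p0 hb h1 h3) h2 h4

lemma card_filter_eq_of_injOn {α β : Type*} [DecidableEq α] [DecidableEq β] {s : Finset α}
    {f : α → β} (hinj : Set.InjOn f s) (k : β) :
    (s.filter fun x => f x = k).card = if k ∈ s.image f then 1 else 0 := by
  by_cases h : k ∈ s.image f
  · obtain ⟨x, hx, rfl⟩ := Finset.mem_image.mp h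
    rw [if_pos h]
    have he : s.filter (fun y => f y = f x) = {x} := by
      ext y
      simp only [Finset.mem_filter, Finset.mem_singleton]
      constructor
      · rintro ⟨hy, hyx⟩; exact hinj hy hx hyx
      · rintro rfl; exact ⟨hx, rfl⟩
    rw [he, Finset.card_singleton]
  · rw [if_neg h, Finset.card_eq_zero, Finset.filter_eq_empty_iff]
    intro x hx he
    exact h (Finset.mem_image.mpr ⟨x, hx, he⟩)

lemma hook_diag_injOn {Z : Finset (ℕ × ℕ)} {i j : ℕ} :
    Set.InjOn (fun b : ℕ × ℕ => (b.2 : ℤ) - (b.1 : ℤ)) (hook Z i j) := by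
  intro x hx y hy he
  simp only [Finset.mem_coe, mem_hook] at hx hy
  simp only at he
  rcases hx.2 with ⟨e1, e2⟩ | ⟨e1, e2⟩ <;> rcases hy.2 with ⟨f1, f2⟩ | ⟨f1, f2⟩ <;>
    exact Prod.ext (by omega) (by omega)

lemma hook_image_diag {Z : Finset (ℕ × ℕ)} (hY : IsYD Z) {i j : ℕ} (hij : (i, j) ∈ Z) :
    (hook Z i j).image (fun b : ℕ × ℕ => (b.2 : ℤ) - (b.1 : ℤ)) =
      Finset.Icc ((j : ℤ) - colLen Z j) ((rowLen Z i : ℤ) - i) := by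
  have hi1 : 1 ≤ i := (hY.1 _ hij).1
  have hj1 : 1 ≤ j := (hY.1 _ hij).2
  have hiC : i ≤ colLen Z j := ((mem_col hY).mp hij).2.2
  have hjR : j ≤ rowLen Z i := ((mem_row hY).mp hij).2.2
  ext k
  simp only [Finset.mem_image, Finset.mem_Icc]
  constructor
  · rintro ⟨b, hb, rfl⟩
    obtain ⟨p, q⟩ := b
    rw [mem_hook] at hb
    simp only at hb ⊢
    rcases hb.2 with ⟨e1, e2⟩ | ⟨e1, e2⟩
    · subst e1
      have hqR : q ≤ rowLen Z p := ((mem_row hY).mp hb.1).2.2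
      omega
    · subst e1
      have hpC : p ≤ colLen Z q := ((mem_col hY).mp hb.1).2.2
      omega
  · rintro ⟨hk1, hk2⟩
    by_cases hc : (j : ℤ) - i ≤ k
    · refine ⟨(i, (k + i).toNat), ?_, ?_⟩
      · rw [mem_hook]
        constructor
        · rw [mem_row hY]
          refine ⟨hi1, by omega, ?_⟩
          omega
        · exact Or.inl ⟨rfl, by omega⟩
      · simp only
        omega
    · refine ⟨(((j : ℤ) - k).toNat, j), ?_, ?_⟩
      · rw [mem_hook]
        constructor
        · rw [mem_col hY]
          refine ⟨hj1, by omega, ?_⟩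
          omega
        · exact Or.inr ⟨rfl, by omega⟩
      · simp only
        omega

lemma shift_injOn {Z : Finset (ℕ × ℕ)} {i j : ℕ} :
    Set.InjOn (shiftBox i j) (Z \ hook Z i j) := by
  intro x hx y hy he
  simp only [Set.mem_diff, Finset.mem_coe] at hx hy
  unfold shiftBox at he
  split_ifs at he with h1 h2 h2
  · simp only [Prod.mk.injEq] at he
    exact Prod.ext (by omega) (by omega)
  · exfalso
    apply hy.2
    rw [mem_hook]
    refine ⟨hy.1, ?_⟩
    have e1 : x.1 - 1 = y.1 := congrArg Prod.fst he
    have e2 : x.2 - 1 = y.2 := congrArg Prod.snd he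
    rcases not_and_or.mp h2 with h | h
    · exact Or.inl ⟨by omega, by omega⟩
    · exact Or.inr ⟨by omega, by omega⟩
  · exfalso
    apply hx.2
    rw [mem_hook]
    refine ⟨hx.1, ?_⟩
    have e1 : y.1 - 1 = x.1 := (congrArg Prod.fst he).symm
    have e2 : y.2 - 1 = x.2 := (congrArg Prod.snd he).symm
    rcases not_and_or.mp h1 with h | h
    · exact Or.inl ⟨by omega, by omega⟩
    · exact Or.inr ⟨by omega, by omega⟩
  · exact he

lemma dk_removeHook {Z : Finset (ℕ × ℕ)} (hY : IsYD Z) {i j : ℕ} (hij : (i, j) ∈ Z) :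
    dk (removeHook Z i j) = cut (dk Z) ((j : ℤ) - colLen Z j) ((rowLen Z i : ℤ) - i) := by
  funext k
  have hc1 : ((hook Z i j).filter (fun b : ℕ × ℕ => (b.2 : ℤ) - (b.1 : ℤ) = k)).card
      = if (j : ℤ) - colLen Z j ≤ k ∧ k ≤ (rowLen Z i : ℤ) - i then 1 else 0 := by
    rw [card_filter_eq_of_injOn hook_diag_injOn k, hook_image_diag hY hij]
    simp [Finset.mem_Icc]
  have hsubf : ((hook Z i j).filter (fun b : ℕ × ℕ => (b.2 : ℤ) - (b.1 : ℤ) = k))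
      ⊆ Z.filter (fun b : ℕ × ℕ => (b.2 : ℤ) - (b.1 : ℤ) = k) :=
    Finset.filter_subset_filter _ (Finset.filter_subset _ _)
  have hcard := Finset.card_le_card hsubf
  have hsd : ((Z \ hook Z i j).filter (fun b : ℕ × ℕ => (b.2 : ℤ) - (b.1 : ℤ) = k)).card
      = (Z.filter (fun b : ℕ × ℕ => (b.2 : ℤ) - (b.1 : ℤ) = k)).card
        - ((hook Z i j).filter (fun b : ℕ × ℕ => (b.2 : ℤ) - (b.1 : ℤ) = k)).card := by
    rw [show (Z \ hook Z i j).filter (fun b : ℕ × ℕ => (b.2 : ℤ) - (b.1 : ℤ) = k)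
        = Z.filter (fun b : ℕ × ℕ => (b.2 : ℤ) - (b.1 : ℤ) = k)
          \ (hook Z i j).filter (fun b : ℕ × ℕ => (b.2 : ℤ) - (b.1 : ℤ) = k) from by
      ext b
      simp only [Finset.mem_sdiff, Finset.mem_filter]
      tauto]
    rw [Finset.card_sdiff, Finset.inter_eq_left.mpr hsubf]
  have himg : dk (removeHook Z i j) k
      = (((Z \ hook Z i j).filter (fun b : ℕ × ℕ => (b.2 : ℤ) - (b.1 : ℤ) = k)).card : ℤ) := by
    unfold dk removeHook
    rw [Finset.filter_image]
    have hmono : ↑(((Z \ hook Z i j)).filter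
        (fun a : ℕ × ℕ => ((shiftBox i j a).2 : ℤ) - ((shiftBox i j a).1 : ℤ) = k))
        ⊆ ((↑Z : Set (ℕ × ℕ)) \ ↑(hook Z i j)) := by
      intro b hb
      simp only [Finset.mem_coe, Finset.mem_filter, Finset.mem_sdiff] at hb
      exact ⟨hb.1.1, hb.1.2⟩
    rw [Finset.card_image_of_injOn (shift_injOn.mono hmono)]
    congr 2
    apply Finset.filter_congr
    intro b hb
    simp only [Finset.mem_sdiff] at hb
    obtain ⟨h1, h2⟩ := hY.1 _ hb.1
    unfold shiftBox
    split_ifs with hcond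
    · simp only
      constructor <;> intro h <;> omega
    · exact Iff.rfl
  rw [himg, cut_app]
  unfold dk
  split_ifs with hk
  · rw [if_pos hk] at hc1
    omega
  · rw [if_neg hk] at hc1
    omega

lemma amul_hook {m n : ℕ} {Z : Finset (ℕ × ℕ)} (hY : IsYD Z) {i j : ℕ} (hij : (i, j) ∈ Z) :
    Amul m n (hook Z i j) = ((Finset.Icc ((j : ℤ) - colLen Z j)
      ((rowLen Z i : ℤ) - i)).val).map (fun k => min (k + (m : ℤ)) ((n : ℤ) - k)) := by
  unfold Amul
  have h1 : (hook Z i j).val.map (unimodal m n)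
      = (hook Z i j).val.map ((fun k : ℤ => min (k + (m : ℤ)) ((n : ℤ) - k))
        ∘ (fun b : ℕ × ℕ => (b.2 : ℤ) - (b.1 : ℤ))) := by
    apply Multiset.map_congr rfl
    intro b hb
    simp only [unimodal, Function.comp]
    congr 1 <;> ring
  rw [h1, ← Multiset.map_map]
  rw [show (hook Z i j).val.map (fun b : ℕ × ℕ => (b.2 : ℤ) - (b.1 : ℤ))
      = ((hook Z i j).image (fun b : ℕ × ℕ => (b.2 : ℤ) - (b.1 : ℤ))).val from
    (Finset.image_val_of_injOn hook_diag_injOn).symm]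
  rw [hook_image_diag hY hij]

lemma fval_lb {m n : ℕ} {L R k : ℤ} (hk : L ≤ k ∧ k ≤ R) :
    min (L + (m : ℤ)) ((n : ℤ) - R) ≤ min (k + (m : ℤ)) ((n : ℤ) - k) := by
  omega

lemma fval_min_mem {m n : ℕ} {L R : ℤ} (hLR : L ≤ R) :
    ∃ k, (L ≤ k ∧ k ≤ R) ∧ min (k + (m : ℤ)) ((n : ℤ) - k)
      = min (L + (m : ℤ)) ((n : ℤ) - R) := by
  rcases le_total (L + (m : ℤ)) ((n : ℤ) - R) with h | h
  · exact ⟨L, ⟨le_rfl, hLR⟩, by omega⟩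
  · exact ⟨R, ⟨hLR, le_rfl⟩, by omega⟩

lemma interval_eq_of_map_eq {m n : ℕ} {L R l r : ℤ} (hLR : L ≤ R) (hlr : l ≤ r)
    (h : ((Finset.Icc L R).val).map (fun k => min (k + (m : ℤ)) ((n : ℤ) - k))
       = ((Finset.Icc l r).val).map (fun k => min (k + (m : ℤ)) ((n : ℤ) - k))) :
    (L = l ∧ R = r) ∨ (L = (n : ℤ) - m - r ∧ R = (n : ℤ) - m - l) := by
  have hcard : Multiset.card (((Finset.Icc L R).val).map
        (fun k => min (k + (m : ℤ)) ((n : ℤ) - k)))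
      = Multiset.card (((Finset.Icc l r).val).map
        (fun k => min (k + (m : ℤ)) ((n : ℤ) - k))) := by rw [h]
  simp only [Multiset.card_map] at hcard
  have hc1 : (Finset.Icc L R).card = (R + 1 - L).toNat := Int.card_Icc _ _
  have hc2 : (Finset.Icc l r).card = (r + 1 - l).toNat := Int.card_Icc _ _
  have hlen : R - L = r - l := by
    have e1 : (Finset.Icc L R).val.card = (Finset.Icc L R).card := rfl
    have e2 : (Finset.Icc l r).val.card = (Finset.Icc l r).card := rfl
    rw [e1, e2, hc1, hc2] at hcard
    omega
  have hv1 : min (L + (m : ℤ)) ((n : ℤ) - R) ≥ min (l + (m : ℤ)) ((n : ℤ) - r) := by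
    obtain ⟨k, hk, he⟩ := fval_min_mem (m := m) (n := n) hLR
    have hmem : min (L + (m : ℤ)) ((n : ℤ) - R) ∈ ((Finset.Icc L R).val).map
        (fun k => min (k + (m : ℤ)) ((n : ℤ) - k)) := by
      rw [Multiset.mem_map]
      exact ⟨k, by rw [← Finset.mem_def, Finset.mem_Icc]; exact hk, he⟩
    rw [h, Multiset.mem_map] at hmem
    obtain ⟨k', hk', he'⟩ := hmem
    rw [← Finset.mem_def, Finset.mem_Icc] at hk'
    have := fval_lb (m := m) (n := n) hk'
    omega
  have hv2 : min (l + (m : ℤ)) ((n : ℤ) - r) ≥ min (L + (m : ℤ)) ((n : ℤ) - R) := by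
    obtain ⟨k, hk, he⟩ := fval_min_mem (m := m) (n := n) hlr
    have hmem : min (l + (m : ℤ)) ((n : ℤ) - r) ∈ ((Finset.Icc l r).val).map
        (fun k => min (k + (m : ℤ)) ((n : ℤ) - k)) := by
      rw [Multiset.mem_map]
      exact ⟨k, by rw [← Finset.mem_def, Finset.mem_Icc]; exact hk, he⟩
    rw [← h, Multiset.mem_map] at hmem
    obtain ⟨k', hk', he'⟩ := hmem
    rw [← Finset.mem_def, Finset.mem_Icc] at hk'
    have := fval_lb (m := m) (n := n) hk'
    omega
  omega

lemma cut_interval_unique {a : ℤ → ℤ} {l r L R : ℤ} (h : cut a l r = cut a L R)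
    (hlr : l ≤ r) (hLR : L ≤ R) : l = L ∧ r = R := by
  have h1 := congrFun h l
  have h2 := congrFun h r
  have h3 := congrFun h L
  have h4 := congrFun h R
  rw [cut_app, cut_app] at h1 h2 h3 h4
  split_ifs at h1 h2 h3 h4 <;> omega

lemma hook_bounds {m n : ℕ} {Z : Finset (ℕ × ℕ)} (hY : IsYD Z) (hsub : Z ⊆ rect m n)
    {i j : ℕ} (hij : (i, j) ∈ Z) :
    -(m : ℤ) < (j : ℤ) - colLen Z j ∧ (j : ℤ) - colLen Z j ≤ (rowLen Z i : ℤ) - i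
      ∧ (rowLen Z i : ℤ) - i < n := by
  have hi1 : 1 ≤ i := (hY.1 _ hij).1
  have hj1 : 1 ≤ j := (hY.1 _ hij).2
  have hiC : i ≤ colLen Z j := ((mem_col hY).mp hij).2.2
  have hjR : j ≤ rowLen Z i := ((mem_row hY).mp hij).2.2
  have hCm : colLen Z j ≤ m := by
    have : (colLen Z j, j) ∈ Z := (mem_col hY).mpr ⟨hj1, by omega, le_rfl⟩
    exact (mem_rect.mp (hsub this)).1.2
  have hRn : rowLen Z i ≤ n := by
    have : (i, rowLen Z i) ∈ Z := (mem_row hY).mpr ⟨hi1, by omega, le_rfl⟩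
    exact (mem_rect.mp (hsub this)).2.2
  omega

lemma D_cut_left {m n : ℕ} {a : ℤ → ℤ} {l r : ℤ} (hD : Dseq m n a)
    (hD' : Dseq m n (cut a l r)) (hl : -(m:ℤ) < l) (hlr : l ≤ r) (hr : r < (n:ℤ)) :
    (l ≤ 0 → a l = a (l-1) + 1) ∧ (1 ≤ l → a l = a (l-1)) := by
  have e1 : cut a l r l = a l - 1 := by rw [cut_app, if_pos ⟨le_refl l, hlr⟩]
  have e0 : cut a l r (l-1) = a (l-1) := by rw [cut_app, if_neg (by omega)]
  constructor
  · intro h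
    have p := hD.2.2.2.1 l hl h
    have q := hD'.2.2.2.1 l hl h
    rw [e1, e0] at q; omega
  · intro h
    have p := hD.2.2.2.2 l h (by omega)
    have q := hD'.2.2.2.2 l h (by omega)
    rw [e1, e0] at q; omega

lemma D_cut_right {m n : ℕ} {a : ℤ → ℤ} {l r : ℤ} (hD : Dseq m n a)
    (hD' : Dseq m n (cut a l r)) (hl : -(m:ℤ) < l) (hlr : l ≤ r) (hr : r < (n:ℤ)) :
    (r ≤ -1 → a (r+1) = a r) ∧ (0 ≤ r → a (r+1) = a r - 1) := by
  have e1 : cut a l r r = a r - 1 := by rw [cut_app, if_pos ⟨hlr, le_refl r⟩]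
  have e0 : cut a l r (r+1) = a (r+1) := by rw [cut_app, if_neg (by omega)]
  constructor
  · intro h
    have p := hD.2.2.2.1 (r+1) (by omega) (by omega)
    have q := hD'.2.2.2.1 (r+1) (by omega) (by omega)
    rw [show r+1-1 = r by ring] at p q
    rw [e1, e0] at q; omega
  · intro h
    have p := hD.2.2.2.2 (r+1) (by omega) (by omega)
    have q := hD'.2.2.2.2 (r+1) (by omega) (by omega)
    rw [show r+1-1 = r by ring] at p q
    rw [e1, e0] at q; omega

lemma no_double {m n : ℕ} {a : ℤ → ℤ} {l r : ℤ} (hD : Dseq m n a)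
    (hD' : Dseq m n (cut a l r)) (hl : -(m:ℤ) < l) (hlr : l ≤ r) (hr : r < (n:ℤ)) :
    ¬ Dseq m n (cut (cut a l r) l r) := by
  intro hDD
  have P := D_cut_left hD hD' hl hlr hr
  have Q := D_cut_left hD' hDD hl hlr hr
  have e1 : cut a l r l = a l - 1 := by rw [cut_app, if_pos ⟨le_refl l, hlr⟩]
  have e0 : cut a l r (l-1) = a (l-1) := by rw [cut_app, if_neg (by omega)]
  rcases le_or_gt l 0 with h | h
  · have p := P.1 h; have q := Q.1 h; rw [e1, e0] at q; omega
  · have p := P.2 h; have q := Q.2 h; rw [e1, e0] at q; omega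

lemma keyB {m n : ℕ} {a : ℤ → ℤ} {l r : ℤ} (hD : Dseq m n a)
    (hD' : Dseq m n (cut a l r)) (hl : -(m:ℤ) < l) (hlr : l ≤ r) (hr : r < (n:ℤ))
    (hDb : Dseq m n (cut (cut a l r) ((n:ℤ)-m-r) ((n:ℤ)-m-l))) :
    ¬ Dseq m n (cut (cut (cut a l r) ((n:ℤ)-m-r) ((n:ℤ)-m-l)) l r) := by
  intro hC
  set ls := (n:ℤ)-m-r with hls
  set rs := (n:ℤ)-m-l with hrs
  set a' := cut a l r with ha'
  set b := cut a' ls rs with hb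
  have Pl := D_cut_left hD hD' hl hlr hr
  have Pr := D_cut_right hD hD' hl hlr hr
  have Bl := D_cut_left hDb hC hl hlr hr
  have Br := D_cut_right hDb hC hl hlr hr
  have ea'l : a' l = a l - 1 := by rw [ha', cut_app, if_pos ⟨le_refl l, hlr⟩]
  have ea'l0 : a' (l-1) = a (l-1) := by rw [ha', cut_app, if_neg (by omega)]
  have ea'r : a' r = a r - 1 := by rw [ha', cut_app, if_pos ⟨hlr, le_refl r⟩]
  have ea'r1 : a' (r+1) = a (r+1) := by rw [ha', cut_app, if_neg (by omega)]
  have hre : rs = l - 1 := by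
    have hbl : b l = if ls ≤ l ∧ l ≤ rs then a' l - 1 else a' l := cut_app ..
    have hbl0 : b (l-1) = if ls ≤ l-1 ∧ l-1 ≤ rs then a' (l-1) - 1 else a' (l-1) := cut_app ..
    rcases le_or_gt l 0 with hc | hc
    · have p := Pl.1 hc; have q := Bl.1 hc
      rw [hbl, hbl0] at q
      split_ifs at q <;> omega
    · have p := Pl.2 hc; have q := Bl.2 hc
      rw [hbl, hbl0] at q
      split_ifs at q <;> omega
  have ebr : b r = a r - 1 := by rw [hb, cut_app, if_neg (by omega)]; exact ea'r
  have ebr1 : b (r+1) = a (r+1) := by rw [hb, cut_app, if_neg (by omega)]; exact ea'r1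
  rcases le_or_gt r (-1) with hc | hc
  · have p := Pr.1 hc; have q := Br.1 hc; omega
  · have p := Pr.2 (by omega); have q := Br.2 (by omega); omega

theorem stmt7 (m n : ℕ) (hm : 1 ≤ m) (hn : 1 ≤ n)
    (Y : Finset (ℕ × ℕ)) (hY : IsYD Y) (hsub : Y ⊆ rect m n)
    (i j : ℕ) (hij : (i, j) ∈ Y) (l r : ℤ)
    (hl : -(m : ℤ) < l) (hlr : l ≤ r) (hr : r < (n : ℤ))
    (hcut : dk (removeHook Y i j) = cut (dk Y) l r)
    (i' j' : ℕ) (hij' : (i', j') ∈ removeHook Y i j)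
    (hA : Amul m n (hook (removeHook Y i j) i' j') = Amul m n (hook Y i j)) :
    dk (removeHook (removeHook Y i j) i' j') =
      cut (dk (removeHook Y i j)) ((n : ℤ) - (m : ℤ) - r) ((n : ℤ) - (m : ℤ) - l) ∧
    ¬∃ i'' j'' : ℕ, (i'', j'') ∈ removeHook (removeHook Y i j) i' j' ∧
        Amul m n (hook (removeHook (removeHook Y i j) i' j') i'' j'') =
          Amul m n (hook Y i j) := by
  obtain ⟨hi1, hj1⟩ : 1 ≤ i ∧ 1 ≤ j := hY.1 _ hij
  set Y1 := removeHook Y i j with hY1def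
  have hY1 : IsYD Y1 := removeHook_isYD hY hi1 hj1
  have hY1r : Y1 ⊆ rect m n := removeHook_subset_rect hsub hi1 hj1
  obtain ⟨hi'1, hj'1⟩ : 1 ≤ i' ∧ 1 ≤ j' := hY1.1 _ hij'
  set Y2 := removeHook Y1 i' j' with hY2def
  have hY2 : IsYD Y2 := removeHook_isYD hY1 hi'1 hj'1
  have hY2r : Y2 ⊆ rect m n := removeHook_subset_rect hY1r hi'1 hj'1
  have hDa : Dseq m n (dk Y) := isYD_dseq hY hsub
  have hDa' : Dseq m n (dk Y1) := isYD_dseq hY1 hY1r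
  have hDacut : Dseq m n (cut (dk Y) l r) := by rw [← hcut]; exact hDa'
  have hDb : Dseq m n (dk Y2) := isYD_dseq hY2 hY2r
  have hG3 : dk Y1 = cut (dk Y) ((j : ℤ) - colLen Y j) ((rowLen Y i : ℤ) - i) :=
    dk_removeHook hY hij
  obtain ⟨hb1, hb2, hb3⟩ := hook_bounds hY hsub hij
  obtain ⟨hLl, hRr⟩ := cut_interval_unique (hcut.symm.trans hG3) hlr hb2
  have hAY : Amul m n (hook Y i j) = ((Finset.Icc l r).val).map
      (fun k => min (k + (m : ℤ)) ((n : ℤ) - k)) := by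
    rw [amul_hook hY hij, ← hLl, ← hRr]
  have hG3' : dk Y2 = cut (dk Y1) ((j' : ℤ) - colLen Y1 j') ((rowLen Y1 i' : ℤ) - i') :=
    dk_removeHook hY1 hij'
  obtain ⟨hb1', hb2', hb3'⟩ := hook_bounds hY1 hY1r hij'
  have hA' : Amul m n (hook Y1 i' j')
      = ((Finset.Icc ((j' : ℤ) - colLen Y1 j') ((rowLen Y1 i' : ℤ) - i')).val).map
        (fun k => min (k + (m : ℤ)) ((n : ℤ) - k)) := amul_hook hY1 hij'
  have hEq : ((Finset.Icc ((j' : ℤ) - colLen Y1 j') ((rowLen Y1 i' : ℤ) - i')).val).map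
        (fun k => min (k + (m : ℤ)) ((n : ℤ) - k))
      = ((Finset.Icc l r).val).map (fun k => min (k + (m : ℤ)) ((n : ℤ) - k)) := by
    rw [← hA', hA, hAY]
  rcases interval_eq_of_map_eq hb2' hlr hEq with ⟨e1, e2⟩ | ⟨e1, e2⟩
  · exfalso
    apply no_double hDa hDacut hl hlr hr
    have he : dk Y2 = cut (cut (dk Y) l r) l r := by rw [hG3', e1, e2, ← hcut]
    rw [← he]
    exact hDb
  · have hpart1 : dk Y2 = cut (dk Y1) ((n : ℤ) - m - r) ((n : ℤ) - m - l) := by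
      rw [hG3', e1, e2]
    refine ⟨hpart1, ?_⟩
    rintro ⟨i'', j'', hij'', hA2⟩
    obtain ⟨hi''1, hj''1⟩ : 1 ≤ i'' ∧ 1 ≤ j'' := hY2.1 _ hij''
    have hY3 : IsYD (removeHook Y2 i'' j'') := removeHook_isYD hY2 hi''1 hj''1
    have hY3r : removeHook Y2 i'' j'' ⊆ rect m n :=
      removeHook_subset_rect hY2r hi''1 hj''1
    have hDc : Dseq m n (dk (removeHook Y2 i'' j'')) := isYD_dseq hY3 hY3r
    have hG3'' : dk (removeHook Y2 i'' j'')
        = cut (dk Y2) ((j'' : ℤ) - colLen Y2 j'') ((rowLen Y2 i'' : ℤ) - i'') :=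
      dk_removeHook hY2 hij''
    obtain ⟨hb1'', hb2'', hb3''⟩ := hook_bounds hY2 hY2r hij''
    have hA'' : Amul m n (hook Y2 i'' j'')
        = ((Finset.Icc ((j'' : ℤ) - colLen Y2 j'') ((rowLen Y2 i'' : ℤ) - i'')).val).map
          (fun k => min (k + (m : ℤ)) ((n : ℤ) - k)) := amul_hook hY2 hij''
    have hEq2 : ((Finset.Icc ((j'' : ℤ) - colLen Y2 j'') ((rowLen Y2 i'' : ℤ) - i'')).val).map
          (fun k => min (k + (m : ℤ)) ((n : ℤ) - k))
        = ((Finset.Icc l r).val).map (fun k => min (k + (m : ℤ)) ((n : ℤ) - k)) := by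
      rw [← hA'', hA2, hAY]
    have hDbcut : Dseq m n (cut (cut (dk Y) l r) ((n : ℤ) - m - r) ((n : ℤ) - m - l)) := by
      rw [← hcut, ← hpart1]
      exact hDb
    rcases interval_eq_of_map_eq hb2'' hlr hEq2 with ⟨f1, f2⟩ | ⟨f1, f2⟩
    · apply keyB hDa hDacut hl hlr hr hDbcut
      have he : dk (removeHook Y2 i'' j'')
          = cut (cut (cut (dk Y) l r) ((n : ℤ) - m - r) ((n : ℤ) - m - l)) l r := by
        rw [hG3'', f1, f2, hpart1, hcut]
      rw [← he]
      exact hDc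
    · have hDprev : Dseq m n (cut (dk Y1) ((n : ℤ) - m - r) ((n : ℤ) - m - l)) := by
        rw [← hpart1]; exact hDb
      apply no_double hDa' hDprev (by omega) (by omega) (by omega)
      have he : dk (removeHook Y2 i'' j'')
          = cut (cut (dk Y1) ((n : ℤ) - m - r) ((n : ℤ) - m - l))
            ((n : ℤ) - m - r) ((n : ℤ) - m - l) := by
        rw [hG3'', f1, f2, hpart1]
      rw [← he]
      exact hDc
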